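/- Consider a discrete-time DER control system with C ≥ 1 controllable buses. Let R, X ∈ ℝ^{C×C} be symmetric positive definite matrices, let v̂ ∈ ℝ^C be fixed, and for each n ∈ {1,…,C} let γ_n, ξ_n : ℝ → ℝ be differentiable with −L_p ≤ γ_n'(v) ≤ 0 and −L_q ≤ ξ_n'(v) ≤ 0 for all v ∈ ℝ. Fix α ≥ 0 and set X̂ := X − αR. Consider the dynamics p_n(t+1) = (1−ε)p_n(t) + ε γ_n(v_n(t)), q_n(t+1) = (1−ε)q_n(t) + ε ξ_n(v_n(t)), where v(t) = R p(t) + X q(t) + v̂. If L_q < 1/(κ(R^{1/2}) · ‖X̂‖) and 0 < ε < min{1, 2/(1 + κ(R^{1/2}) L_q ‖X̂‖ + (L_p + α L_q) ‖R‖)}, then this system has a unique equilibrium point (p*, q*), and for every initial condition (p(0), q(0)) the trajectory (p(t), q(t)) converges to (p*, q*) as t → ∞. -/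

import Mathlib

open Matrix Filter Topology

/-- The operator norm on real `C × C` matrices induced by the Euclidean (ℓ2) vector norm. -/
noncomputable def opNorm {C : ℕ} (A : Matrix (Fin C) (Fin C) ℝ) : ℝ :=
  ‖(Matrix.toEuclideanCLM (𝕜 := ℝ) A : EuclideanSpace ℝ (Fin C) →L[ℝ] EuclideanSpace ℝ (Fin C))‖

/-- Condition number `κ(A) = ‖A‖ ‖A⁻¹‖`. -/
noncomputable def condNumber {C : ℕ} (A : Matrix (Fin C) (Fin C) ℝ) : ℝ :=
  opNorm A * opNorm A⁻¹

set_option synthInstance.maxHeartbeats 1000000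
set_option maxHeartbeats 2000000
set_option linter.unusedVariables false


/-- Mean value theorem packaging: for a differentiable `f` with `-L ≤ f' ≤ 0`,
the difference `f a - f b` is `-(d * (a - b))` with `d ∈ [0, L]`. -/
lemma mvt_slope (f : ℝ → ℝ) (L : ℝ) (hd : Differentiable ℝ f)
    (hb : ∀ v, -L ≤ deriv f v ∧ deriv f v ≤ 0) (a b : ℝ) :
    ∃ d : ℝ, 0 ≤ d ∧ d ≤ L ∧ f a - f b = -(d * (a - b)) := by
  have key : ∀ u w : ℝ, u < w → ∃ d : ℝ, 0 ≤ d ∧ d ≤ L ∧ f w - f u = -(d * (w - u)) := by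
    intro u w huw
    obtain ⟨c, _, hc⟩ := exists_deriv_eq_slope f huw hd.continuous.continuousOn
      hd.differentiableOn
    refine ⟨-deriv f c, by linarith [(hb c).2], by linarith [(hb c).1], ?_⟩
    have hne : w - u ≠ 0 := by linarith
    field_simp at hc
    linarith [hc]
  rcases lt_trichotomy a b with h | h | h
  · obtain ⟨d, h0, hL, he⟩ := key a b h
    exact ⟨d, h0, hL, by linarith [he]⟩
  · exact ⟨0, le_refl _, by linarith [(hb 0).1, (hb 0).2], by rw [h]; ring⟩
  · obtain ⟨d, h0, hL, he⟩ := key b a h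
    exact ⟨d, h0, hL, by linarith [he]⟩

/-- Linear recursive bound with vanishing input implies convergence to zero. -/
lemma seq_tendsto_zero (r : ℝ) (hr0 : 0 ≤ r) (hr1 : r < 1) (a b : ℕ → ℝ)
    (ha : ∀ t, 0 ≤ a t) (hrec : ∀ t, a (t + 1) ≤ r * a t + b t)
    (hb : Tendsto b atTop (𝓝 0)) : Tendsto a atTop (𝓝 0) := by
  rw [Metric.tendsto_atTop]
  intro δ hδ
  have h1r : 0 < 1 - r := by linarith
  set η := (1 - r) * δ / 2 with hη
  have hηpos : 0 < η := by positivity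
  obtain ⟨T, hT⟩ := (Metric.tendsto_atTop.mp hb) η hηpos
  have hble : ∀ t ≥ T, b t ≤ η := by
    intro t ht
    have := hT t ht
    rw [Real.dist_eq, sub_zero] at this
    exact (abs_le.mp this.le).2
  have hkey : ∀ k, a (T + k) ≤ r ^ k * a T + δ / 2 := by
    intro k
    induction k with
    | zero => simpa using by nlinarith [ha T]
    | succ k ih =>
      have h1 : a (T + k + 1) ≤ r * a (T + k) + b (T + k) := hrec _
      have h2 : b (T + k) ≤ η := hble _ (Nat.le_add_right _ _)
      have h3 : r * a (T + k) ≤ r * (r ^ k * a T + δ / 2) :=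
        mul_le_mul_of_nonneg_left ih hr0
      have : a (T + (k + 1)) ≤ r * (r ^ k * a T + δ / 2) + η := by
        have : T + (k + 1) = T + k + 1 := by ring
        rw [this]; linarith
      calc a (T + (k + 1)) ≤ r * (r ^ k * a T + δ / 2) + η := this
        _ ≤ r ^ (k + 1) * a T + δ / 2 := by rw [hη]; ring_nf; nlinarith [ha T]
  have hpow : Tendsto (fun k => r ^ k * a T) atTop (𝓝 0) := by
    simpa using (tendsto_pow_atTop_nhds_zero_of_lt_one hr0 hr1).mul_const (a T)
  obtain ⟨K, hK⟩ := (Metric.tendsto_atTop.mp hpow) (δ / 2) (by linarith)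
  refine ⟨T + K, fun t ht => ?_⟩
  have htT : T ≤ t := le_trans (Nat.le_add_right _ _) ht
  have h1 : a t ≤ r ^ (t - T) * a T + δ / 2 := by
    have := hkey (t - T)
    rwa [Nat.add_sub_cancel' htT] at this
  have h2 : r ^ (t - T) * a T ≤ r ^ K * a T := by
    apply mul_le_mul_of_nonneg_right _ (ha T)
    exact pow_le_pow_of_le_one hr0 hr1.le (by omega)
  have h3 := hK K le_rfl
  rw [Real.dist_eq, sub_zero] at h3 ⊢
  have h4 : r ^ K * a T < δ / 2 := lt_of_abs_lt h3
  rw [abs_of_nonneg (ha t)]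
  linarith

variable {C : ℕ}

noncomputable def eE (v : Fin C → ℝ) : EuclideanSpace ℝ (Fin C) :=
  (WithLp.equiv 2 (Fin C → ℝ)).symm v

lemma eE_sub (u v : Fin C → ℝ) : eE (u - v) = eE u - eE v := rfl
lemma eE_smul (c : ℝ) (v : Fin C → ℝ) : eE (c • v) = c • eE v := rfl

lemma opNorm_nonneg (A : Matrix (Fin C) (Fin C) ℝ) : 0 ≤ opNorm A := by
  unfold opNorm
  exact norm_nonneg ((Matrix.toEuclideanCLM (𝕜 := ℝ) A :
    EuclideanSpace ℝ (Fin C) →L[ℝ] EuclideanSpace ℝ (Fin C)))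

lemma mulVec_norm_le (A : Matrix (Fin C) (Fin C) ℝ) (v : Fin C → ℝ) :
    ‖eE (A.mulVec v)‖ ≤ opNorm A * ‖eE v‖ := by
  have h := (Matrix.toEuclideanCLM (𝕜 := ℝ) A).le_opNorm (eE v)
  simpa [eE, opNorm, Matrix.toEuclideanCLM_toLp, Matrix.toLin'_apply] using h

lemma inner_eE (u v : Fin C → ℝ) : (inner ℝ (eE u) (eE v) : ℝ) = u ⬝ᵥ v := by
  simp [eE, PiLp.inner_apply, RCLike.inner_apply, dotProduct, mul_comm]

lemma norm_eE_sq (v : Fin C → ℝ) : ‖eE v‖ ^ 2 = v ⬝ᵥ v := by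
  rw [← inner_eE]; exact (real_inner_self_eq_norm_sq _).symm

-- pointwise comparison gives norm comparison
lemma norm_eE_le_of_pointwise {u w : Fin C → ℝ} {c : ℝ} (hc : 0 ≤ c)
    (h : ∀ i, |u i| ≤ c * |w i|) : ‖eE u‖ ≤ c * ‖eE w‖ := by
  have h2 : ‖eE u‖ ^ 2 ≤ (c * ‖eE w‖) ^ 2 := by
    rw [norm_eE_sq, mul_pow, norm_eE_sq]
    unfold dotProduct
    rw [Finset.mul_sum]
    apply Finset.sum_le_sum
    intro i _
    have := h i
    nlinarith [abs_nonneg (u i), abs_nonneg (w i), sq_abs (u i), sq_abs (w i)]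
  have := Real.sqrt_le_sqrt h2
  rwa [Real.sqrt_sq (norm_nonneg _), Real.sqrt_sq (by positivity)] at this

lemma sq_le_to_le {a b : ℝ} (ha : 0 ≤ a) (hb : 0 ≤ b) (h : a ^ 2 ≤ b ^ 2) : a ≤ b := by
  nlinarith

lemma mulVec_S_sq (S Rm : Matrix (Fin C) (Fin C) ℝ) (hStr : Sᵀ = S) (hSS : S * S = Rm)
    (z : Fin C → ℝ) : ‖eE (S.mulVec z)‖ ^ 2 = z ⬝ᵥ Rm.mulVec z := by
  rw [norm_eE_sq, Matrix.dotProduct_mulVec ((S.mulVec z)), ← Matrix.mulVec_transpose, hStr,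
    Matrix.mulVec_mulVec, hSS, dotProduct_comm]

lemma quad_form_le (Rm : Matrix (Fin C) (Fin C) ℝ) (z : Fin C → ℝ) :
    z ⬝ᵥ Rm.mulVec z ≤ opNorm Rm * ‖eE z‖ ^ 2 := by
  have h1 : z ⬝ᵥ Rm.mulVec z = (inner ℝ (eE z) (eE (Rm.mulVec z)) : ℝ) := (inner_eE _ _).symm
  have h2 := real_inner_le_norm (eE z) (eE (Rm.mulVec z))
  have h3 := mulVec_norm_le Rm z
  nlinarith [norm_nonneg (eE z)]

/-- Main symmetric-part estimate: `‖(1-ε)x - ε S D S x‖ ≤ max (1-ε) (ε(1+B)-1) ‖x‖`. -/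
lemma core_L1 (S Rm : Matrix (Fin C) (Fin C) ℝ) (hStr : Sᵀ = S) (hSS : S * S = Rm)
    (ε L0 : ℝ) (hε0 : 0 < ε) (hε1 : ε < 1) (hL0 : 0 ≤ L0)
    (d : Fin C → ℝ) (hd : ∀ i, 0 ≤ d i ∧ d i ≤ L0) (x : Fin C → ℝ) :
    ‖eE ((1 - ε) • x - ε • S.mulVec (fun k => d k * S.mulVec x k))‖
      ≤ max (1 - ε) (ε * (1 + L0 * opNorm Rm) - 1) * ‖eE x‖ := by
  set y := S.mulVec x with hy
  set g : Fin C → ℝ := fun k => d k * y k with hg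
  set B := L0 * opNorm Rm with hB
  set ρ := max (1 - ε) (ε * (1 + B) - 1) with hρ
  have hρ1ε : 1 - ε ≤ ρ := le_max_left _ _
  have hρ2 : ε * (1 + B) - 1 ≤ ρ := le_max_right _ _
  have hρ0 : (0:ℝ) ≤ ρ := le_trans (by linarith) hρ1ε
  have hRm0 : 0 ≤ opNorm Rm := opNorm_nonneg _
  have hB0 : 0 ≤ B := by positivity
  -- the quantity t = ⟨x, S D S x⟩ = Σ d i y i²
  set t : ℝ := y ⬝ᵥ g with ht
  have htsum : t = ∑ i, d i * y i ^ 2 := by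
    rw [ht]; unfold dotProduct; exact Finset.sum_congr rfl (fun i _ => by ring)
  have ht0 : 0 ≤ t := by
    rw [htsum]; apply Finset.sum_nonneg; intro i _
    have := (hd i).1; positivity
  have hinner_t : (inner ℝ (eE x) (eE (S.mulVec g)) : ℝ) = t := by
    rw [inner_eE, Matrix.dotProduct_mulVec x, ← Matrix.mulVec_transpose, hStr, ← hy, ht]
  have hy2 : ‖eE y‖ ^ 2 ≤ opNorm Rm * ‖eE x‖ ^ 2 := by
    rw [hy, mulVec_S_sq S Rm hStr hSS]; exact quad_form_le Rm x
  have htB : t ≤ B * ‖eE x‖ ^ 2 := by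
    have h1 : t ≤ L0 * ‖eE y‖ ^ 2 := by
      rw [htsum, norm_eE_sq]
      unfold dotProduct
      rw [Finset.mul_sum]
      apply Finset.sum_le_sum
      intro i _
      have h1 := (hd i).1; have h2 := (hd i).2
      nlinarith [sq_nonneg (y i)]
    nlinarith
  have hG2 : ‖eE (S.mulVec g)‖ ^ 2 ≤ B * t := by
    rw [mulVec_S_sq S Rm hStr hSS]
    have h1 := quad_form_le Rm g
    have h2 : ‖eE g‖ ^ 2 ≤ L0 * t := by
      rw [norm_eE_sq, htsum, Finset.mul_sum]
      unfold dotProduct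
      apply Finset.sum_le_sum
      intro i _
      simp only [hg]
      nlinarith [mul_nonneg (mul_nonneg (sub_nonneg.mpr (hd i).2) (hd i).1) (sq_nonneg (y i))]
    nlinarith
  -- expansion of the squared norm
  have hexp : ‖eE ((1 - ε) • x - ε • S.mulVec g)‖ ^ 2
      = (1 - ε) ^ 2 * ‖eE x‖ ^ 2 - 2 * ((1 - ε) * ε * t) + ε ^ 2 * ‖eE (S.mulVec g)‖ ^ 2 := by
    rw [eE_sub, eE_smul, eE_smul, norm_sub_sq_real, real_inner_smul_left, real_inner_smul_right,
      hinner_t, norm_smul, norm_smul]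
    simp [Real.norm_eq_abs, abs_of_pos hε0, abs_of_pos (by linarith : (0:ℝ) < 1 - ε)]
    ring
  have hsq : ‖eE ((1 - ε) • x - ε • S.mulVec g)‖ ^ 2 ≤ (ρ * ‖eE x‖) ^ 2 := by
    rw [hexp, mul_pow]
    have h5 : ε ^ 2 * ‖eE (S.mulVec g)‖ ^ 2 ≤ ε ^ 2 * (B * t) :=
      mul_le_mul_of_nonneg_left hG2 (sq_nonneg ε)
    rcases le_or_gt (ε * B - 2 * (1 - ε)) 0 with hcase | hcase
    · have key : (1 - ε) ^ 2 ≤ ρ ^ 2 := by nlinarith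
      have hterm : ε * t * (ε * B - 2 * (1 - ε)) ≤ 0 :=
        mul_nonpos_of_nonneg_of_nonpos (mul_nonneg hε0.le ht0) hcase
      nlinarith [h5, hterm, mul_nonneg (sub_nonneg.mpr key) (sq_nonneg (‖eE x‖))]
    · have key : (1 - ε - ε * B) ^ 2 ≤ ρ ^ 2 := by nlinarith
      have h6 : ε * (ε * B - 2 * (1 - ε)) * t ≤ ε * (ε * B - 2 * (1 - ε)) * (B * ‖eE x‖ ^ 2) :=
        mul_le_mul_of_nonneg_left htB (by nlinarith)
      nlinarith [h5, h6, mul_nonneg (sub_nonneg.mpr key) (sq_nonneg (‖eE x‖))]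
  exact sq_le_to_le (norm_nonneg _) (by positivity) hsq

/-- Global asymptotic stability of the incremental DER control strategy:
under the slope conditions on the equilibrium functions and the bounds on `L_q` and `ε`,
the closed-loop system has a unique equilibrium point, which is globally attractive. -/
theorem unique_globally_asymptotically_stable_equilibrium
    {C : ℕ} (hC : 1 ≤ C)
    (R X : Matrix (Fin C) (Fin C) ℝ) (hR : R.PosDef) (hX : X.PosDef)
    (Rhalf : Matrix (Fin C) (Fin C) ℝ) (hRhalfPD : Rhalf.PosDef)
    (hRhalfSq : Rhalf * Rhalf = R)
    (vhat : Fin C → ℝ) (γ ξ : Fin C → ℝ → ℝ) (Lp Lq : ℝ)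
    (hγd : ∀ n, Differentiable ℝ (γ n)) (hξd : ∀ n, Differentiable ℝ (ξ n))
    (hγ : ∀ n v, -Lp ≤ deriv (γ n) v ∧ deriv (γ n) v ≤ 0)
    (hξ : ∀ n v, -Lq ≤ deriv (ξ n) v ∧ deriv (ξ n) v ≤ 0)
    (α : ℝ) (hα : 0 ≤ α) (ε : ℝ)
    (hLq : Lq < 1 / (condNumber Rhalf * opNorm (X - α • R)))
    (hε0 : 0 < ε)
    (hε1 : ε < min 1 (2 / (1 + condNumber Rhalf * Lq * opNorm (X - α • R)
        + (Lp + α * Lq) * opNorm R))) :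
    ∃ pstar qstar : Fin C → ℝ,
      -- (p*, q*) is an equilibrium point of the dynamics
      (∀ n, pstar n = (1 - ε) * pstar n
          + ε * γ n ((R.mulVec pstar + X.mulVec qstar + vhat) n)) ∧
      (∀ n, qstar n = (1 - ε) * qstar n
          + ε * ξ n ((R.mulVec pstar + X.mulVec qstar + vhat) n)) ∧
      -- the equilibrium is unique
      (∀ p' q' : Fin C → ℝ,
        (∀ n, p' n = (1 - ε) * p' n
            + ε * γ n ((R.mulVec p' + X.mulVec q' + vhat) n)) →
        (∀ n, q' n = (1 - ε) * q' n
            + ε * ξ n ((R.mulVec p' + X.mulVec q' + vhat) n)) →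
        p' = pstar ∧ q' = qstar) ∧
      -- every trajectory of the dynamics converges to (p*, q*)
      (∀ p q : ℕ → Fin C → ℝ,
        (∀ t n, p (t + 1) n = (1 - ε) * p t n
            + ε * γ n ((R.mulVec (p t) + X.mulVec (q t) + vhat) n)) →
        (∀ t n, q (t + 1) n = (1 - ε) * q t n
            + ε * ξ n ((R.mulVec (p t) + X.mulVec (q t) + vhat) n)) →
        Tendsto p atTop (𝓝 pstar) ∧ Tendsto q atTop (𝓝 qstar)) := by
  classical
  set Xh : Matrix (Fin C) (Fin C) ℝ := X - α • R with hXhdef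
  set L0 : ℝ := Lp + α * Lq with hL0def
  set cB : ℝ := L0 * opNorm R with hcBdef
  set cA : ℝ := condNumber Rhalf * Lq * opNorm Xh with hcAdef
  -- basic facts about Rhalf
  have hdet : IsUnit Rhalf.det := hRhalfPD.det_pos.ne'.isUnit
  have hStr : Rhalfᵀ = Rhalf := by
    ext i j
    have h := congrFun (congrFun hRhalfPD.isHermitian i) j
    simpa [Matrix.conjTranspose_apply, Matrix.transpose_apply] using h
  have hSinvMul : Rhalf⁻¹ * Rhalf = 1 := Matrix.nonsing_inv_mul Rhalf hdet
  have hMulSinv : Rhalf * Rhalf⁻¹ = 1 := Matrix.mul_nonsing_inv Rhalf hdet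
  have hSinvR : Rhalf⁻¹ * R = Rhalf := by
    rw [← hRhalfSq, ← mul_assoc, hSinvMul, one_mul]
  have hcancel1 : ∀ v : Fin C → ℝ, Rhalf.mulVec (Rhalf⁻¹.mulVec v) = v := by
    intro v; rw [Matrix.mulVec_mulVec, hMulSinv, Matrix.one_mulVec]
  have hcancel2 : ∀ v : Fin C → ℝ, Rhalf⁻¹.mulVec (Rhalf.mulVec v) = v := by
    intro v; rw [Matrix.mulVec_mulVec, hSinvMul, Matrix.one_mulVec]
  -- nonnegativity of constants
  have hLp0 : 0 ≤ Lp := by have h := hγ ⟨0, hC⟩ 0; linarith [h.1, h.2]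
  have hLq0 : 0 ≤ Lq := by have h := hξ ⟨0, hC⟩ 0; linarith [h.1, h.2]
  have hL00 : 0 ≤ L0 := by rw [hL0def]; positivity
  have hR0 : 0 ≤ opNorm R := opNorm_nonneg R
  have hXh0 : 0 ≤ opNorm Xh := opNorm_nonneg Xh
  have hK0 : 0 ≤ condNumber Rhalf :=
    mul_nonneg (opNorm_nonneg Rhalf) (opNorm_nonneg Rhalf⁻¹)
  have hcA0 : 0 ≤ cA := by rw [hcAdef]; positivity
  have hcB0 : 0 ≤ cB := by rw [hcBdef]; positivity
  have hε1' : ε < 1 := lt_of_lt_of_le hε1 (min_le_left _ _)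
  have hsum_pos : (0:ℝ) < 1 + cA + cB := by linarith
  have hεsum : ε * (1 + cA + cB) < 2 := by
    have h := lt_of_lt_of_le hε1 (min_le_right _ _)
    rw [lt_div_iff₀ hsum_pos] at h
    linarith
  have hA1 : cA < 1 := by
    rcases eq_or_lt_of_le (mul_nonneg hK0 hXh0) with h | h
    · rw [hcAdef]; nlinarith
    · have h2 : Lq * (condNumber Rhalf * opNorm Xh) < 1 := (lt_div_iff₀ h).mp hLq
      rw [hcAdef]; nlinarith
  set ρ : ℝ := max (1 - ε) (ε * (1 + cB) - 1) with hρdef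
  have hρ1ε : 1 - ε ≤ ρ := le_max_left _ _
  have hρ0 : 0 ≤ ρ := le_trans (by linarith) hρ1ε
  set lam : ℝ := ρ + ε * cA with hlamdef
  have hlam0 : 0 ≤ lam := by rw [hlamdef]; positivity
  have hlam1 : lam < 1 := by
    have h1 : 1 - ε < 1 - ε * cA := by nlinarith
    have h2 : ε * (1 + cB) - 1 < 1 - ε * cA := by nlinarith
    have h3 : ρ < 1 - ε * cA := max_lt h1 h2
    rw [hlamdef]; linarith
  -- the voltage update map
  set Fm : (Fin C → ℝ) → (Fin C → ℝ) := fun v =>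
    (1 - ε) • v + ε • (R.mulVec (fun k => γ k (v k)) + X.mulVec (fun k => ξ k (v k)) + vhat)
    with hFdef
  -- core contraction estimate
  have keyF : ∀ v v' : Fin C → ℝ,
      ‖eE (Rhalf⁻¹.mulVec (Fm v) - Rhalf⁻¹.mulVec (Fm v'))‖
        ≤ lam * ‖eE (Rhalf⁻¹.mulVec v - Rhalf⁻¹.mulVec v')‖ := by
    intro v v'
    choose dp hdp0 hdpL hdpe using fun n => mvt_slope (γ n) Lp (hγd n) (hγ n) (v n) (v' n)
    choose dq hdq0 hdqL hdqe using fun n => mvt_slope (ξ n) Lq (hξd n) (hξ n) (v n) (v' n)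
    set w : Fin C → ℝ := v - v' with hw
    set x : Fin C → ℝ := Rhalf⁻¹.mulVec w with hx
    have hwx : Rhalf.mulVec x = w := by rw [hx]; exact hcancel1 w
    have hγv : ((fun k => γ k (v k)) - fun k => γ k (v' k)) = fun k => -(dp k * w k) := by
      funext k
      have := hdpe k
      simp only [Pi.sub_apply, hw]
      rw [this]
    have hξv : ((fun k => ξ k (v k)) - fun k => ξ k (v' k)) = fun k => -(dq k * w k) := by
      funext k
      have := hdqe k
      simp only [Pi.sub_apply, hw]
      rw [this]
    have hdiff : Fm v - Fm v'
        = (1 - ε) • w - ε • (R.mulVec (fun k => (dp k + α * dq k) * w k)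
            + Xh.mulVec (fun k => dq k * w k)) := by
      have e1 : Fm v - Fm v' = (1 - ε) • w
          + ε • (R.mulVec ((fun k => γ k (v k)) - fun k => γ k (v' k))
            + X.mulVec ((fun k => ξ k (v k)) - fun k => ξ k (v' k))) := by
        simp only [hFdef, Matrix.mulVec_sub, hw, smul_sub]
        module
      rw [e1, hγv, hξv]
      have e2 : (fun k => (dp k + α * dq k) * w k)
          = (fun k => dp k * w k) + α • fun k => dq k * w k := by
        funext k; simp [Pi.add_apply, Pi.smul_apply, smul_eq_mul]; ring
      have e3 : (fun k => -(dp k * w k)) = -fun k => (dp k * w k) := by funext k; simp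
      have e4 : (fun k => -(dq k * w k)) = -fun k => (dq k * w k) := by funext k; simp
      rw [e2, e3, e4, Matrix.mulVec_neg, Matrix.mulVec_neg, Matrix.mulVec_add,
        Matrix.mulVec_smul, hXhdef, Matrix.sub_mulVec, Matrix.smul_mulVec]
      simp only [smul_add, smul_neg, smul_sub]
      abel
    have hmain : Rhalf⁻¹.mulVec (Fm v) - Rhalf⁻¹.mulVec (Fm v')
        = ((1 - ε) • x - ε • Rhalf.mulVec (fun k => (dp k + α * dq k) * Rhalf.mulVec x k))
          - ε • (Rhalf⁻¹.mulVec (Xh.mulVec (fun k => dq k * Rhalf.mulVec x k))) := by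
      rw [← Matrix.mulVec_sub, hdiff, hwx]
      rw [Matrix.mulVec_sub, Matrix.mulVec_smul, Matrix.mulVec_smul, Matrix.mulVec_add]
      rw [Matrix.mulVec_mulVec, hSinvR, ← hx]
      module
    have hb1 : ‖eE ((1 - ε) • x - ε • Rhalf.mulVec (fun k => (dp k + α * dq k)
        * Rhalf.mulVec x k))‖ ≤ ρ * ‖eE x‖ := by
      have hdbound : ∀ k, 0 ≤ dp k + α * dq k ∧ dp k + α * dq k ≤ L0 := by
        intro k
        constructor
        · nlinarith [hdp0 k, mul_nonneg hα (hdq0 k)]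
        · rw [hL0def]
          nlinarith [hdpL k, mul_le_mul_of_nonneg_left (hdqL k) hα]
      have := core_L1 Rhalf R hStr hRhalfSq ε L0 hε0 hε1' hL00
        (fun k => dp k + α * dq k) hdbound x
      rw [hρdef, hcBdef]
      exact this
    have hb2 : ‖eE (Rhalf⁻¹.mulVec (Xh.mulVec (fun k => dq k * Rhalf.mulVec x k)))‖
        ≤ condNumber Rhalf * Lq * opNorm Xh * ‖eE x‖ := by
      have e1 : ‖eE (fun k => dq k * Rhalf.mulVec x k)‖ ≤ Lq * ‖eE (Rhalf.mulVec x)‖ := by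
        apply norm_eE_le_of_pointwise hLq0
        intro i
        rw [abs_mul]
        exact mul_le_mul_of_nonneg_right (by rw [abs_of_nonneg (hdq0 i)]; exact hdqL i)
          (abs_nonneg _)
      have e2 := mulVec_norm_le Rhalf x
      have e3 := mulVec_norm_le Xh (fun k => dq k * Rhalf.mulVec x k)
      have e4 := mulVec_norm_le Rhalf⁻¹ (Xh.mulVec (fun k => dq k * Rhalf.mulVec x k))
      have hnx0 : 0 ≤ ‖eE x‖ := norm_nonneg _
      have hS0 : 0 ≤ opNorm Rhalf := opNorm_nonneg _
      have hSi0 : 0 ≤ opNorm Rhalf⁻¹ := opNorm_nonneg _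
      calc ‖eE (Rhalf⁻¹.mulVec (Xh.mulVec (fun k => dq k * Rhalf.mulVec x k)))‖
          ≤ opNorm Rhalf⁻¹ * ‖eE (Xh.mulVec (fun k => dq k * Rhalf.mulVec x k))‖ := e4
        _ ≤ opNorm Rhalf⁻¹ * (opNorm Xh * ‖eE (fun k => dq k * Rhalf.mulVec x k)‖) := by
            apply mul_le_mul_of_nonneg_left e3 hSi0
        _ ≤ opNorm Rhalf⁻¹ * (opNorm Xh * (Lq * (opNorm Rhalf * ‖eE x‖))) := by
            apply mul_le_mul_of_nonneg_left _ hSi0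
            apply mul_le_mul_of_nonneg_left _ hXh0
            exact le_trans e1 (mul_le_mul_of_nonneg_left e2 hLq0)
        _ = condNumber Rhalf * Lq * opNorm Xh * ‖eE x‖ := by
            rw [condNumber, opNorm, opNorm]; ring
    have hxid : x = Rhalf⁻¹.mulVec v - Rhalf⁻¹.mulVec v' := by
      rw [hx, hw, Matrix.mulVec_sub]
    calc ‖eE (Rhalf⁻¹.mulVec (Fm v) - Rhalf⁻¹.mulVec (Fm v'))‖
        = ‖eE ((1 - ε) • x - ε • Rhalf.mulVec (fun k => (dp k + α * dq k) * Rhalf.mulVec x k))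
            - ε • eE (Rhalf⁻¹.mulVec (Xh.mulVec (fun k => dq k * Rhalf.mulVec x k)))‖ := by
          rw [hmain, eE_sub, eE_smul]
      _ ≤ ‖eE ((1 - ε) • x - ε • Rhalf.mulVec (fun k => (dp k + α * dq k) * Rhalf.mulVec x k))‖
            + ‖ε • eE (Rhalf⁻¹.mulVec (Xh.mulVec (fun k => dq k * Rhalf.mulVec x k)))‖ :=
          norm_sub_le _ _
      _ ≤ ρ * ‖eE x‖ + ε * (condNumber Rhalf * Lq * opNorm Xh * ‖eE x‖) := by
          apply add_le_add hb1
          rw [norm_smul, Real.norm_eq_abs, abs_of_pos hε0]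
          exact mul_le_mul_of_nonneg_left hb2 hε0.le
      _ = lam * ‖eE x‖ := by rw [hlamdef, hcAdef]; ring
      _ = lam * ‖eE (Rhalf⁻¹.mulVec v - Rhalf⁻¹.mulVec v')‖ := by rw [← hxid]
    -- the conjugated map on Euclidean space
  set Φ : EuclideanSpace ℝ (Fin C) → EuclideanSpace ℝ (Fin C) := fun m =>
    eE (Rhalf⁻¹.mulVec (Fm (Rhalf.mulVec ((WithLp.equiv 2 (Fin C → ℝ)) m)))) with hΦdef
  have hKlt : (⟨lam, hlam0⟩ : NNReal) < 1 := by
    exact NNReal.coe_lt_coe.mp hlam1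
  have hLip : LipschitzWith ⟨lam, hlam0⟩ Φ := by
    apply LipschitzWith.of_dist_le_mul
    intro m m'
    rw [dist_eq_norm, dist_eq_norm]
    have h := keyF (Rhalf.mulVec ((WithLp.equiv 2 (Fin C → ℝ)) m))
      (Rhalf.mulVec ((WithLp.equiv 2 (Fin C → ℝ)) m'))
    rw [hcancel2, hcancel2] at h
    have e1 : Φ m - Φ m'
        = eE (Rhalf⁻¹.mulVec (Fm (Rhalf.mulVec ((WithLp.equiv 2 (Fin C → ℝ)) m)))
          - Rhalf⁻¹.mulVec (Fm (Rhalf.mulVec ((WithLp.equiv 2 (Fin C → ℝ)) m')))) := by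
      rw [eE_sub]
    have e2 : m - m' = eE ((WithLp.equiv 2 (Fin C → ℝ)) m - (WithLp.equiv 2 (Fin C → ℝ)) m') :=
      rfl
    rw [e1, e2]
    exact h
  have hcontr : ContractingWith ⟨lam, hlam0⟩ Φ := ⟨hKlt, hLip⟩
  set mstar : EuclideanSpace ℝ (Fin C) := ContractingWith.fixedPoint Φ hcontr with hmstardef
  have hfix : Φ mstar = mstar := hcontr.fixedPoint_isFixedPt
  set vstar : Fin C → ℝ := Rhalf.mulVec ((WithLp.equiv 2 (Fin C → ℝ)) mstar) with hvstardef
  have hFv : Fm vstar = vstar := by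
    have h1 : Rhalf⁻¹.mulVec (Fm vstar) = (WithLp.equiv 2 (Fin C → ℝ)) mstar :=
      congrArg (WithLp.equiv 2 (Fin C → ℝ)) hfix
    calc Fm vstar = Rhalf.mulVec (Rhalf⁻¹.mulVec (Fm vstar)) := (hcancel1 _).symm
      _ = Rhalf.mulVec ((WithLp.equiv 2 (Fin C → ℝ)) mstar) := by rw [h1]
      _ = vstar := rfl
  have hvRX : R.mulVec (fun n => γ n (vstar n)) + X.mulVec (fun n => ξ n (vstar n)) + vhat
      = vstar := by
    funext n
    have h := congrFun hFv n
    have h2 : (1 - ε) * vstar n + (ε * (R.mulVec (fun k => γ k (vstar k))) n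
        + ε * (X.mulVec (fun k => ξ k (vstar k))) n + ε * vhat n) = vstar n := by
      simpa [hFdef, Pi.add_apply, Pi.smul_apply, smul_eq_mul] using h
    have h3 : ε * ((R.mulVec (fun k => γ k (vstar k))) n + (X.mulVec (fun k => ξ k (vstar k))) n
        + vhat n) = ε * vstar n := by linarith
    simp only [Pi.add_apply]
    exact mul_left_cancel₀ hε0.ne' h3
  refine ⟨fun n => γ n (vstar n), fun n => ξ n (vstar n), ?_, ?_, ?_, ?_⟩
  · intro n
    rw [hvRX]
    ring
  · intro n
    rw [hvRX]
    ring
  · -- uniqueness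
    intro p' q' hp' hq'
    set v' : Fin C → ℝ := R.mulVec p' + X.mulVec q' + vhat with hv'def
    have hp'' : ∀ n, p' n = γ n (v' n) := by
      intro n
      have h := hp' n
      have h2 : ε * p' n = ε * γ n (v' n) := by rw [hv'def]; linarith
      exact mul_left_cancel₀ hε0.ne' h2
    have hq'' : ∀ n, q' n = ξ n (v' n) := by
      intro n
      have h := hq' n
      have h2 : ε * q' n = ε * ξ n (v' n) := by rw [hv'def]; linarith
      exact mul_left_cancel₀ hε0.ne' h2
    have hFv' : Fm v' = v' := by
      have e1 : (fun k => γ k (v' k)) = p' := funext fun k => (hp'' k).symm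
      have e2 : (fun k => ξ k (v' k)) = q' := funext fun k => (hq'' k).symm
      show (1 - ε) • v' + ε • (R.mulVec (fun k => γ k (v' k)) + X.mulVec (fun k => ξ k (v' k))
          + vhat) = v'
      rw [e1, e2, ← hv'def]
      funext n
      simp only [Pi.add_apply, Pi.smul_apply, smul_eq_mul]
      ring
    have hfp' : Function.IsFixedPt Φ (eE (Rhalf⁻¹.mulVec v')) := by
      show eE (Rhalf⁻¹.mulVec (Fm (Rhalf.mulVec
        ((WithLp.equiv 2 (Fin C → ℝ)) (eE (Rhalf⁻¹.mulVec v')))))) = eE (Rhalf⁻¹.mulVec v')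
      rw [show (WithLp.equiv 2 (Fin C → ℝ)) (eE (Rhalf⁻¹.mulVec v')) = Rhalf⁻¹.mulVec v'
        from rfl, hcancel1, hFv']
    have hmeq : eE (Rhalf⁻¹.mulVec v') = mstar := hcontr.fixedPoint_unique hfp'
    have hveq : v' = vstar := by
      have h1 : Rhalf⁻¹.mulVec v' = (WithLp.equiv 2 (Fin C → ℝ)) mstar :=
        congrArg (WithLp.equiv 2 (Fin C → ℝ)) hmeq
      calc v' = Rhalf.mulVec (Rhalf⁻¹.mulVec v') := (hcancel1 _).symm
        _ = Rhalf.mulVec ((WithLp.equiv 2 (Fin C → ℝ)) mstar) := by rw [h1]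
        _ = vstar := rfl
    constructor
    · funext n
      rw [hp'' n, hveq]
    · funext n
      rw [hq'' n, hveq]
  · -- convergence of trajectories
    intro p q hp hq
    set v : ℕ → Fin C → ℝ := fun t => R.mulVec (p t) + X.mulVec (q t) + vhat with hvdef
    have hps : ∀ t, p (t + 1) = (1 - ε) • p t + ε • (fun k => γ k (v t k)) := by
      intro t
      funext n
      have h := hp t n
      simp only [Pi.add_apply, Pi.smul_apply, smul_eq_mul]
      rw [h, hvdef]
    have hqs : ∀ t, q (t + 1) = (1 - ε) • q t + ε • (fun k => ξ k (v t k)) := by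
      intro t
      funext n
      have h := hq t n
      simp only [Pi.add_apply, Pi.smul_apply, smul_eq_mul]
      rw [h, hvdef]
    have hvstep : ∀ t, v (t + 1) = Fm (v t) := by
      intro t
      have e0 : v (t + 1) = R.mulVec (p (t + 1)) + X.mulVec (q (t + 1)) + vhat := rfl
      rw [e0, hps t, hqs t]
      show R.mulVec ((1 - ε) • p t + ε • fun k => γ k (v t k))
          + X.mulVec ((1 - ε) • q t + ε • fun k => ξ k (v t k)) + vhat
        = (1 - ε) • v t + ε • (R.mulVec (fun k => γ k (v t k))
            + X.mulVec (fun k => ξ k (v t k)) + vhat)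
      rw [Matrix.mulVec_add, Matrix.mulVec_add, Matrix.mulVec_smul, Matrix.mulVec_smul,
        Matrix.mulVec_smul, Matrix.mulVec_smul, hvdef]
      module
    set m : ℕ → EuclideanSpace ℝ (Fin C) := fun t => eE (Rhalf⁻¹.mulVec (v t)) with hmdef
    have hmstep : ∀ t, m (t + 1) = Φ (m t) := by
      intro t
      show eE (Rhalf⁻¹.mulVec (v (t + 1)))
        = eE (Rhalf⁻¹.mulVec (Fm (Rhalf.mulVec
            ((WithLp.equiv 2 (Fin C → ℝ)) (eE (Rhalf⁻¹.mulVec (v t)))))))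
      rw [show (WithLp.equiv 2 (Fin C → ℝ)) (eE (Rhalf⁻¹.mulVec (v t))) = Rhalf⁻¹.mulVec (v t)
        from rfl, hcancel1, hvstep t]
    have hiter : ∀ t, m t = Φ^[t] (m 0) := by
      intro t
      induction t with
      | zero => simp
      | succ t ih => rw [hmstep t, ih, Function.iterate_succ_apply']
    have htend : Tendsto m atTop (𝓝 mstar) := by
      have h := hcontr.tendsto_iterate_fixedPoint (m 0)
      exact h.congr (fun t => (hiter t).symm)
    have hvtend : ∀ n, Tendsto (fun t => v t n) atTop (𝓝 (vstar n)) := by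
      intro n
      have c1 : Continuous (WithLp.equiv 2 (Fin C → ℝ)) := PiLp.continuous_ofLp 2 _
      have c2 : Continuous (fun u : Fin C → ℝ => Rhalf.mulVec u) :=
        LinearMap.continuous_of_finiteDimensional (Matrix.mulVecLin Rhalf)
      have hcont : Continuous (fun u : EuclideanSpace ℝ (Fin C)
          => Rhalf.mulVec ((WithLp.equiv 2 (Fin C → ℝ)) u) n) :=
        (continuous_apply n).comp (c2.comp c1)
      have h := (hcont.tendsto mstar).comp htend
      have e1 : (fun t => Rhalf.mulVec ((WithLp.equiv 2 (Fin C → ℝ)) (m t)) n)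
          = fun t => v t n := by
        funext t
        rw [show (WithLp.equiv 2 (Fin C → ℝ)) (m t) = Rhalf⁻¹.mulVec (v t) from rfl, hcancel1]
      rw [show (Rhalf.mulVec ((WithLp.equiv 2 (Fin C → ℝ)) mstar) n) = vstar n from rfl] at h
      exact e1 ▸ h
    have hconv : ∀ (r : ℕ → Fin C → ℝ) (φ : Fin C → ℝ → ℝ) (L : ℝ),
        (∀ n, Differentiable ℝ (φ n)) → (∀ n w, -L ≤ deriv (φ n) w ∧ deriv (φ n) w ≤ 0) →
        0 ≤ L →
        (∀ t n, r (t + 1) n = (1 - ε) * r t n + ε * φ n (v t n)) →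
        Tendsto r atTop (𝓝 (fun n => φ n (vstar n))) := by
      intro r φ L hφd hφb hL0' hr
      rw [tendsto_pi_nhds]
      intro n
      have hrec : ∀ t, |r (t + 1) n - φ n (vstar n)|
          ≤ (1 - ε) * |r t n - φ n (vstar n)| + ε * L * |v t n - vstar n| := by
        intro t
        obtain ⟨d, hd0, hdL, hde⟩ := mvt_slope (φ n) L (hφd n) (hφb n) (v t n) (vstar n)
        have h1 : r (t + 1) n - φ n (vstar n)
            = (1 - ε) * (r t n - φ n (vstar n)) + ε * (φ n (v t n) - φ n (vstar n)) := by
          rw [hr t n]; ring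
        rw [h1]
        have h2 : |φ n (v t n) - φ n (vstar n)| ≤ L * |v t n - vstar n| := by
          rw [hde, abs_neg, abs_mul, abs_of_nonneg hd0]
          exact mul_le_mul_of_nonneg_right hdL (abs_nonneg _)
        calc |(1 - ε) * (r t n - φ n (vstar n)) + ε * (φ n (v t n) - φ n (vstar n))|
            ≤ |(1 - ε) * (r t n - φ n (vstar n))| + |ε * (φ n (v t n) - φ n (vstar n))| :=
              abs_add_le _ _
          _ = (1 - ε) * |r t n - φ n (vstar n)| + ε * |φ n (v t n) - φ n (vstar n)| := by
              rw [abs_mul, abs_mul, abs_of_nonneg (by linarith : (0:ℝ) ≤ 1 - ε),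
                abs_of_nonneg hε0.le]
          _ ≤ (1 - ε) * |r t n - φ n (vstar n)| + ε * L * |v t n - vstar n| := by
              have := mul_le_mul_of_nonneg_left h2 hε0.le
              linarith
      have hbtend : Tendsto (fun t => ε * L * |v t n - vstar n|) atTop (𝓝 0) := by
        have h1 : Tendsto (fun t => v t n - vstar n) atTop (𝓝 0) := by
          have := (hvtend n).sub (tendsto_const_nhds (x := vstar n))
          simpa using this
        have h2 := h1.abs
        rw [abs_zero] at h2
        have h3 := h2.const_mul (ε * L)
        simpa using h3
      have := seq_tendsto_zero (1 - ε) (by linarith) (by linarith)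
        (fun t => |r t n - φ n (vstar n)|) (fun t => ε * L * |v t n - vstar n|)
        (fun t => abs_nonneg _) hrec hbtend
      rw [tendsto_iff_dist_tendsto_zero]
      simpa [Real.dist_eq] using this
    constructor
    · exact hconv p γ Lp hγd hγ hLp0 (fun t n => hp t n)
    · exact hconv q ξ Lq hξd hξ hLq0 (fun t n => hq t n)
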